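/- arXiv:1904.05186 — 2 statements merged into one kernel-verified Lean document; each statement's English description precedes it below -/
import Mathlib

section
/- Let q and z be points of the Euclidean plane ℝ² with q ≠ z, let d = dist(q, z), and let δ be a real number with 0 < δ ≤ d. Then the set of angles θ ∈ [0, 2π) such that the ray {q + t·(cos θ, sin θ) : t ≥ 0} meets the closed ball of radius δ centered at z has one-dimensional Lebesgue measure at least 2δ/d. -/
open MeasureTheory

/-- The unit vector in the Euclidean plane in direction `θ`. -/
noncomputable def planeDir (θ : ℝ) : EuclideanSpace ℝ (Fin 2) :=
  (WithLp.equiv 2 (Fin 2 → ℝ)).symm ![Real.cos θ, Real.sin θ]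

/-- Algebraic core: law-of-cosines style identity. -/
lemma planeDir_alg (c s C S d : ℝ) (h1 : s ^ 2 + c ^ 2 = 1) :
    (d * (c * C + s * S) * c - d * C) ^ 2 + (d * (c * C + s * S) * s - d * S) ^ 2
      = (d * (s * C - c * S)) ^ 2 := by
  linear_combination (d ^ 2 * ((c * C + s * S) ^ 2 - 1 - (S ^ 2 + C ^ 2 - 1))) * h1

/-- If the direction `θ` makes a small enough angle with the direction `θ₀` of `z - q`,
the ray from `q` in direction `θ` hits the closed `δ`-ball around `z`. -/
lemma hit_of_angle (q z : EuclideanSpace ℝ (Fin 2)) (hqz : q ≠ z) (δ : ℝ) (hδ : 0 < δ)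
    (θ₀ θ : ℝ)
    (hc : Real.cos θ₀ = (z 0 - q 0) / dist q z)
    (hs : Real.sin θ₀ = (z 1 - q 1) / dist q z)
    (h1 : 0 ≤ Real.cos (θ - θ₀)) (h2 : |Real.sin (θ - θ₀)| ≤ δ / dist q z) :
    ∃ t : ℝ, 0 ≤ t ∧ q + t • planeDir θ ∈ Metric.closedBall z δ := by
  set d : ℝ := dist q z with hd
  have hd0 : 0 < d := dist_pos.mpr hqz
  refine ⟨d * Real.cos (θ - θ₀), by positivity, ?_⟩
  have ha : z 0 - q 0 = d * Real.cos θ₀ := by rw [hc]; field_simp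
  have hb : z 1 - q 1 = d * Real.sin θ₀ := by rw [hs]; field_simp
  rw [Metric.mem_closedBall, EuclideanSpace.dist_eq]
  have e0 : (q + (d * Real.cos (θ - θ₀)) • planeDir θ) 0
      = q 0 + d * Real.cos (θ - θ₀) * Real.cos θ := rfl
  have e1 : (q + (d * Real.cos (θ - θ₀)) • planeDir θ) 1
      = q 1 + d * Real.cos (θ - θ₀) * Real.sin θ := rfl
  have hsum : ∑ i, dist ((q + (d * Real.cos (θ - θ₀)) • planeDir θ) i) (z i) ^ 2
      = (d * Real.sin (θ - θ₀)) ^ 2 := by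
    rw [Fin.sum_univ_two, Real.dist_eq, Real.dist_eq, sq_abs, sq_abs, e0, e1,
      Real.cos_sub, Real.sin_sub]
    have h1' : q 0 + d * (Real.cos θ * Real.cos θ₀ + Real.sin θ * Real.sin θ₀) * Real.cos θ - z 0
        = d * (Real.cos θ * Real.cos θ₀ + Real.sin θ * Real.sin θ₀) * Real.cos θ
          - d * Real.cos θ₀ := by linarith
    have h2' : q 1 + d * (Real.cos θ * Real.cos θ₀ + Real.sin θ * Real.sin θ₀) * Real.sin θ - z 1
        = d * (Real.cos θ * Real.cos θ₀ + Real.sin θ * Real.sin θ₀) * Real.sin θ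
          - d * Real.sin θ₀ := by linarith
    rw [h1', h2']
    exact planeDir_alg _ _ _ _ _ (Real.sin_sq_add_cos_sq θ)
  rw [hsum]
  have habs : |d * Real.sin (θ - θ₀)| ≤ δ := by
    rw [abs_mul, abs_of_pos hd0]
    calc d * |Real.sin (θ - θ₀)| ≤ d * (δ / d) :=
          mul_le_mul_of_nonneg_left h2 hd0.le
      _ = δ := by field_simp
  calc Real.sqrt ((d * Real.sin (θ - θ₀)) ^ 2)
      = |d * Real.sin (θ - θ₀)| := Real.sqrt_sq_eq_abs _
    _ ≤ δ := habs

/-- The set of directions `θ ∈ [0, 2π)` whose ray from `q` meets the closed `δ`-ball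
around `z` (with `0 < δ ≤ d = dist q z`) has Lebesgue measure at least `2δ/d`. -/
theorem measure_directions_hitting_ball_ge (q z : EuclideanSpace ℝ (Fin 2)) (hqz : q ≠ z)
    (δ : ℝ) (hδ : 0 < δ) (hδd : δ ≤ dist q z) :
    ENNReal.ofReal (2 * δ / dist q z) ≤
      volume {θ ∈ Set.Ico 0 (2 * Real.pi) |
        ∃ t : ℝ, 0 ≤ t ∧ q + t • planeDir θ ∈ Metric.closedBall z δ} := by
  set d : ℝ := dist q z with hd
  have hd0 : 0 < d := dist_pos.mpr hqz
  have hπ := Real.pi_pos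
  -- the direction of z - q
  set w : ℂ := ⟨z 0 - q 0, z 1 - q 1⟩ with hw
  have hwabs : ‖w‖ = d := by
    rw [Complex.norm_def, hw, Complex.normSq_mk, hd, EuclideanSpace.dist_eq,
      Fin.sum_univ_two, Real.dist_eq, Real.dist_eq, sq_abs, sq_abs]
    ring_nf
  have hw0 : w ≠ 0 := by
    intro h
    rw [h, norm_zero] at hwabs
    exact hd0.ne hwabs
  set θ₀ : ℝ := if Complex.arg w < 0 then Complex.arg w + 2 * Real.pi else Complex.arg w
    with hθ₀def
  have hcos0 : Real.cos θ₀ = (z 0 - q 0) / d := by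
    have : Real.cos θ₀ = Real.cos (Complex.arg w) := by
      rw [hθ₀def]; split
      · exact Real.cos_add_two_pi _
      · rfl
    rw [this, Complex.cos_arg hw0, hwabs]
  have hsin0 : Real.sin θ₀ = (z 1 - q 1) / d := by
    have : Real.sin θ₀ = Real.sin (Complex.arg w) := by
      rw [hθ₀def]; split
      · exact Real.sin_add_two_pi _
      · rfl
    rw [this, Complex.sin_arg, hwabs]
  have hθ₀mem : θ₀ ∈ Set.Ico 0 (2 * Real.pi) := by
    have h1 := Complex.neg_pi_lt_arg w
    have h2 := Complex.arg_le_pi w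
    rw [hθ₀def]
    split <;> constructor <;> linarith
  obtain ⟨hθ₀0, hθ₀2π⟩ := hθ₀mem
  -- arcsin of the ratio
  set s : ℝ := Real.arcsin (δ / d) with hsdef
  have hr0 : 0 < δ / d := div_pos hδ hd0
  have hr1 : δ / d ≤ 1 := (div_le_one hd0).mpr hδd
  have hs0 : 0 < s := Real.arcsin_pos.mpr hr0
  have hsπ : s ≤ Real.pi / 2 := Real.arcsin_le_pi_div_two _
  have hsins : Real.sin s = δ / d := Real.sin_arcsin (by linarith) hr1
  have hsge : δ / d ≤ s := by
    have := Real.sin_le hs0.le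
    linarith [hsins ▸ this]
  -- any θ within s of θ₀ (mod 2π) is a good direction
  have hgood : ∀ c θ : ℝ, (c = θ₀ ∨ c = θ₀ + 2 * Real.pi ∨ c = θ₀ - 2 * Real.pi) →
      |θ - c| ≤ s → ∃ t : ℝ, 0 ≤ t ∧ q + t • planeDir θ ∈ Metric.closedBall z δ := by
    intro c θ hc hθc
    have habs : |θ - c| ≤ Real.pi / 2 := hθc.trans hsπ
    have hmem : θ - c ∈ Set.Icc (-(Real.pi / 2)) (Real.pi / 2) := abs_le.mp habs
    have hmem' : -(θ - c) ∈ Set.Icc (-(Real.pi / 2)) (Real.pi / 2) := by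
      constructor <;> [linarith [hmem.2]; linarith [hmem.1]]
    have hsmem : s ∈ Set.Icc (-(Real.pi / 2)) (Real.pi / 2) := ⟨by linarith, hsπ⟩
    have hcosc : 0 ≤ Real.cos (θ - c) := Real.cos_nonneg_of_mem_Icc hmem
    have hsin1 : Real.sin (θ - c) ≤ δ / d := by
      rw [← hsins]
      exact Real.strictMonoOn_sin.monotoneOn hmem hsmem (by
        have := abs_le.mp hθc; linarith [this.2])
    have hsin2 : -(δ / d) ≤ Real.sin (θ - c) := by
      have : Real.sin (-(θ - c)) ≤ δ / d := by
        rw [← hsins]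
        exact Real.strictMonoOn_sin.monotoneOn hmem' hsmem (by
          have := abs_le.mp hθc; linarith [this.1])
      rw [Real.sin_neg] at this; linarith
    have hsinc : |Real.sin (θ - c)| ≤ δ / d := abs_le.mpr ⟨hsin2, hsin1⟩
    rcases hc with rfl | rfl | rfl
    · exact hit_of_angle q z hqz δ hδ _ θ hcos0 hsin0 hcosc hsinc
    · have h1 : θ - θ₀ = (θ - (θ₀ + 2 * Real.pi)) + 2 * Real.pi := by ring
      refine hit_of_angle q z hqz δ hδ _ θ hcos0 hsin0 ?_ ?_
      · rw [h1, Real.cos_add_two_pi]; exact hcosc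
      · rw [h1, Real.sin_add_two_pi]; exact hsinc
    · have h1 : θ - θ₀ = (θ - (θ₀ - 2 * Real.pi)) - 2 * Real.pi := by ring
      refine hit_of_angle q z hqz δ hδ _ θ hcos0 hsin0 ?_ ?_
      · rw [h1, Real.cos_sub_two_pi]; exact hcosc
      · rw [h1, Real.sin_sub_two_pi]; exact hsinc
  set S := {θ ∈ Set.Ico 0 (2 * Real.pi) |
      ∃ t : ℝ, 0 ≤ t ∧ q + t • planeDir θ ∈ Metric.closedBall z δ} with hS
  have hfinal : ENNReal.ofReal (2 * δ / d) ≤ ENNReal.ofReal (2 * s) := by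
    apply ENNReal.ofReal_le_ofReal
    rw [mul_div_assoc]
    linarith
  by_cases hcase1 : θ₀ < s
  · -- wrap-around on the left: [0, θ₀+s) ∪ [θ₀+2π-s, 2π)
    have hsub : Set.Ico 0 (θ₀ + s) ∪ Set.Ico (θ₀ + 2 * Real.pi - s) (2 * Real.pi) ⊆ S := by
      rintro θ (⟨h1, h2⟩ | ⟨h1, h2⟩)
      · refine ⟨⟨h1, by linarith⟩, hgood θ₀ θ (Or.inl rfl) (abs_le.mpr ⟨by linarith, by linarith⟩)⟩
      · refine ⟨⟨by linarith, h2⟩,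
          hgood (θ₀ + 2 * Real.pi) θ (Or.inr (Or.inl rfl))
            (abs_le.mpr ⟨by linarith, by linarith⟩)⟩
    have hdisj : Disjoint (Set.Ico (0:ℝ) (θ₀ + s))
        (Set.Ico (θ₀ + 2 * Real.pi - s) (2 * Real.pi)) := by
      rw [Set.disjoint_left]
      rintro θ ⟨_, h2⟩ ⟨h3, _⟩
      linarith
    calc ENNReal.ofReal (2 * δ / d) ≤ ENNReal.ofReal (2 * s) := hfinal
      _ = ENNReal.ofReal (θ₀ + s - 0) + ENNReal.ofReal (2 * Real.pi - (θ₀ + 2 * Real.pi - s)) := by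
          rw [← ENNReal.ofReal_add (by linarith) (by linarith)]
          ring_nf
      _ = volume (Set.Ico 0 (θ₀ + s) ∪ Set.Ico (θ₀ + 2 * Real.pi - s) (2 * Real.pi)) := by
          rw [measure_union hdisj measurableSet_Ico, Real.volume_Ico, Real.volume_Ico]
      _ ≤ volume S := measure_mono hsub
  · by_cases hcase2 : 2 * Real.pi - s < θ₀
    · -- wrap-around on the right: [0, θ₀-2π+s) ∪ [θ₀-s, 2π)
      have hsub : Set.Ico 0 (θ₀ - 2 * Real.pi + s) ∪ Set.Ico (θ₀ - s) (2 * Real.pi) ⊆ S := by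
        rintro θ (⟨h1, h2⟩ | ⟨h1, h2⟩)
        · refine ⟨⟨h1, by linarith⟩,
            hgood (θ₀ - 2 * Real.pi) θ (Or.inr (Or.inr rfl))
              (abs_le.mpr ⟨by linarith, by linarith⟩)⟩
        · refine ⟨⟨by linarith, h2⟩,
            hgood θ₀ θ (Or.inl rfl) (abs_le.mpr ⟨by linarith, by linarith⟩)⟩
      have hdisj : Disjoint (Set.Ico (0:ℝ) (θ₀ - 2 * Real.pi + s))
          (Set.Ico (θ₀ - s) (2 * Real.pi)) := by
        rw [Set.disjoint_left]
        rintro θ ⟨_, h2⟩ ⟨h3, _⟩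
        linarith
      calc ENNReal.ofReal (2 * δ / d) ≤ ENNReal.ofReal (2 * s) := hfinal
        _ = ENNReal.ofReal (θ₀ - 2 * Real.pi + s - 0)
            + ENNReal.ofReal (2 * Real.pi - (θ₀ - s)) := by
            rw [← ENNReal.ofReal_add (by linarith) (by linarith)]
            ring_nf
        _ = volume (Set.Ico 0 (θ₀ - 2 * Real.pi + s) ∪ Set.Ico (θ₀ - s) (2 * Real.pi)) := by
            rw [measure_union hdisj measurableSet_Ico, Real.volume_Ico, Real.volume_Ico]
        _ ≤ volume S := measure_mono hsub
    · -- no wrap-around: [θ₀-s, θ₀+s)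
      push_neg at hcase1 hcase2
      have hsub : Set.Ico (θ₀ - s) (θ₀ + s) ⊆ S := by
        rintro θ ⟨h1, h2⟩
        refine ⟨⟨by linarith, by linarith⟩,
          hgood θ₀ θ (Or.inl rfl) (abs_le.mpr ⟨by linarith, by linarith⟩)⟩
      calc ENNReal.ofReal (2 * δ / d) ≤ ENNReal.ofReal (2 * s) := hfinal
        _ = volume (Set.Ico (θ₀ - s) (θ₀ + s)) := by rw [Real.volume_Ico]; ring_nf
        _ ≤ volume S := measure_mono hsub
end

section
/- Let q and z be points of the Euclidean plane ℝ² with q ≠ z, let d = dist(q, z), and let δ be a real number with 0 < δ < d. Then the set of angles θ ∈ [0, 2π) such that the ray {q + t·(cos θ, sin θ) : t ≥ 0} meets the closed ball of radius δ centered at z has one-dimensional Lebesgue measure exactly 2·arcsin(δ/d). -/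
open MeasureTheory

open Real Set

lemma ray_hit_iff {E : Type*} [NormedAddCommGroup E] [InnerProductSpace ℝ E]
    (u v : E) (hu : ‖u‖ = 1) {δ : ℝ} (hδ : 0 < δ) (hδd : δ < ‖v‖) :
    (∃ t : ℝ, 0 ≤ t ∧ ‖t • u - v‖ ≤ δ) ↔
      Real.sqrt (‖v‖ ^ 2 - δ ^ 2) ≤ inner ℝ u v := by
  set s := Real.sqrt (‖v‖ ^ 2 - δ ^ 2) with hs
  have hsub : 0 ≤ ‖v‖ ^ 2 - δ ^ 2 := by nlinarith
  have hs0 : 0 ≤ s := Real.sqrt_nonneg _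
  have hs2 : s ^ 2 = ‖v‖ ^ 2 - δ ^ 2 := Real.sq_sqrt hsub
  constructor
  · rintro ⟨t, ht0, ht⟩
    have htpos : 0 < t := by
      rcases lt_or_eq_of_le ht0 with h | h
      · exact h
      · exfalso
        rw [← h, zero_smul, zero_sub, norm_neg] at ht
        linarith
    have hexp : ‖t • u - v‖ ^ 2 = t ^ 2 - 2 * (t * inner ℝ u v) + ‖v‖ ^ 2 := by
      rw [norm_sub_sq_real, real_inner_smul_left, norm_smul, hu]
      rw [mul_one, Real.norm_eq_abs, sq_abs]
      try ring
    have hsq : ‖t • u - v‖ ^ 2 ≤ δ ^ 2 := by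
      have := norm_nonneg (t • u - v)
      nlinarith
    nlinarith [sq_nonneg (t - s)]
  · intro h
    have hspos : 0 < s := Real.sqrt_pos.2 (by nlinarith)
    refine ⟨inner ℝ u v, le_trans hs0 h, ?_⟩
    have hexp : ‖(inner ℝ u v : ℝ) • u - v‖ ^ 2 = ‖v‖ ^ 2 - (inner ℝ u v : ℝ) ^ 2 := by
      rw [norm_sub_sq_real, real_inner_smul_left, norm_smul, hu]
      rw [mul_one, Real.norm_eq_abs, sq_abs]
      ring
    nlinarith [norm_nonneg ((inner ℝ u v : ℝ) • u - v), hexp]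

/-- The set of directions `θ ∈ [0, 2π)` whose ray from `q` meets the closed `δ`-ball
around `z` (with `0 < δ < d = dist q z`) has Lebesgue measure exactly `2·arcsin(δ/d)`. -/
theorem measure_directions_hitting_ball_eq (q z : EuclideanSpace ℝ (Fin 2)) (hqz : q ≠ z)
    (δ : ℝ) (hδ : 0 < δ) (hδd : δ < dist q z) :
    volume {θ ∈ Set.Ico 0 (2 * Real.pi) |
        ∃ t : ℝ, 0 ≤ t ∧ q + t • planeDir θ ∈ Metric.closedBall z δ} =
      ENNReal.ofReal (2 * Real.arcsin (δ / dist q z)) := by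
  set v : EuclideanSpace ℝ (Fin 2) := z - q with hv
  set d : ℝ := dist q z with hd
  have hdv : ‖v‖ = d := by rw [hv, hd, dist_eq_norm, ← norm_neg]; congr 1; abel
  have hdpos : 0 < d := by rw [hd, dist_pos]; exact hqz
  set w : ℂ := Complex.mk (v 0) (v 1) with hw
  have hwabs : ‖w‖ = d := by
    rw [← hdv, Complex.norm_def, Complex.normSq_mk, EuclideanSpace.norm_eq]
    congr 1
    simp [Fin.sum_univ_two, sq_abs, sq]
  have hwne : w ≠ 0 := by
    intro h
    rw [h, norm_zero] at hwabs
    linarith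
  set φ : ℝ := Complex.arg w with hφ
  have hv0 : v 0 = d * Real.cos φ := by
    have := Complex.cos_arg hwne
    rw [hwabs] at this
    rw [hφ, this, hw]
    field_simp
  have hv1 : v 1 = d * Real.sin φ := by
    have := Complex.sin_arg w
    rw [hwabs] at this
    rw [hφ, this, hw]
    field_simp
  have hdir_norm : ∀ θ : ℝ, ‖planeDir θ‖ = 1 := by
    intro θ
    rw [planeDir, EuclideanSpace.norm_eq]
    simp only [WithLp.equiv_symm_apply, PiLp.toLp_apply, Fin.sum_univ_two, Matrix.cons_val_zero,
      Matrix.cons_val_one, Matrix.head_cons, Real.norm_eq_abs, sq_abs]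
    rw [Real.cos_sq_add_sin_sq, Real.sqrt_one]
  have hinner : ∀ θ : ℝ, (inner ℝ (planeDir θ) v : ℝ) = d * Real.cos (θ - φ) := by
    intro θ
    have h1 : (inner ℝ (planeDir θ) v : ℝ) = Real.cos θ * v 0 + Real.sin θ * v 1 := by
      rw [planeDir]
      simp [PiLp.inner_apply, RCLike.inner_apply, Fin.sum_univ_two]
      ring
    rw [h1, hv0, hv1, Real.cos_sub]
    ring
  set a : ℝ := Real.arcsin (δ / d) with ha
  have hapos : 0 < a := Real.arcsin_pos.2 (div_pos hδ hdpos)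
  have hapi2 : a ≤ Real.pi / 2 := Real.arcsin_le_pi_div_two _
  have hapi : a < Real.pi := lt_of_le_of_lt hapi2 (by linarith [Real.pi_pos])
  have hsqrt : Real.sqrt (d ^ 2 - δ ^ 2) = d * Real.cos a := by
    rw [ha, Real.cos_arcsin]
    rw [show d ^ 2 - δ ^ 2 = d ^ 2 * (1 - (δ / d) ^ 2) by field_simp]
    rw [Real.sqrt_mul (sq_nonneg d), Real.sqrt_sq hdpos.le]
  -- the hitting set equals {θ | cos a ≤ cos (θ - φ)} ∩ Ico 0 (2π)
  set A : Set ℝ := {θ : ℝ | Real.cos a ≤ Real.cos (θ - φ)} with hA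
  have hset : {θ ∈ Set.Ico 0 (2 * Real.pi) |
      ∃ t : ℝ, 0 ≤ t ∧ q + t • planeDir θ ∈ Metric.closedBall z δ} =
        A ∩ Set.Ico 0 (2 * Real.pi) := by
    ext θ
    simp only [Set.mem_setOf_eq, Set.mem_inter_iff, hA]
    rw [and_comm]
    refine and_congr_left fun _ => ?_
    have hmem : ∀ t : ℝ, (q + t • planeDir θ ∈ Metric.closedBall z δ) ↔
        ‖t • planeDir θ - v‖ ≤ δ := by
      intro t
      rw [Metric.mem_closedBall, dist_eq_norm]
      congr! 1
      congr 1
      rw [hv]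
      abel
    simp only [hmem]
    rw [ray_hit_iff (planeDir θ) v (hdir_norm θ) hδ (by rw [hdv]; exact hδd)]
    rw [hdv, hsqrt, hinner θ]
    exact ⟨fun h => le_of_mul_le_mul_left h hdpos, fun h => mul_le_mul_of_nonneg_left h hdpos.le⟩
  rw [hset]
  have h2pi : 0 < 2 * Real.pi := by positivity
  have hAmeas : MeasurableSet A := by
    have : A = (fun θ => Real.cos (θ - φ)) ⁻¹' Set.Ici (Real.cos a) := rfl
    rw [this]
    exact (Real.continuous_cos.comp (continuous_id.sub continuous_const)).measurable
      measurableSet_Ici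
  -- replace Ico by Ioc (a.e. equal)
  have hIcoIoc : volume (A ∩ Set.Ico 0 (2 * Real.pi)) = volume (A ∩ Set.Ioc 0 (2 * Real.pi)) :=
    measure_congr ((Filter.EventuallyEq.refl _ A).inter Ico_ae_eq_Ioc)
  rw [hIcoIoc]
  -- A is invariant under 2π translations
  have hinv : ∀ g : AddSubgroup.zmultiples (2 * Real.pi), (fun x => g +ᵥ x) ⁻¹' A = A := by
    rintro ⟨g, hg⟩
    obtain ⟨k, rfl⟩ := (AddSubgroup.mem_zmultiples_iff).1 hg
    ext θ
    simp only [Set.mem_preimage, hA, Set.mem_setOf_eq]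
    have : (k • (2 * Real.pi) : ℝ) + θ - φ = (θ - φ) + (k : ℝ) * (2 * Real.pi) := by
      rw [zsmul_eq_mul]; ring
    rw [show ((⟨k • (2 * Real.pi), hg⟩ : AddSubgroup.zmultiples (2 * Real.pi)) +ᵥ θ)
      = (k • (2 * Real.pi) : ℝ) + θ from rfl, this, Real.cos_add_int_mul_two_pi]
  have hfd1 := isAddFundamentalDomain_Ioc h2pi 0 (volume : Measure ℝ)
  have hfd2 := isAddFundamentalDomain_Ioc h2pi (φ - Real.pi) (volume : Measure ℝ)
  rw [zero_add] at hfd1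
  have hshift : volume (A ∩ Set.Ioc 0 (2 * Real.pi)) =
      volume (A ∩ Set.Ioc (φ - Real.pi) (φ - Real.pi + 2 * Real.pi)) :=
    hfd1.measure_set_eq hfd2 hAmeas hinv
  rw [hshift]
  have harc : A ∩ Set.Ioc (φ - Real.pi) (φ - Real.pi + 2 * Real.pi) =
      Set.Icc (φ - a) (φ + a) := by
    ext θ
    simp only [hA, Set.mem_inter_iff, Set.mem_setOf_eq, Set.mem_Ioc, Set.mem_Icc]
    constructor
    · rintro ⟨hcos, hθ1, hθ2⟩
      have hx1 : -Real.pi < θ - φ := by linarith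
      have hx2 : θ - φ ≤ Real.pi := by linarith
      have habs : |θ - φ| ≤ a := by
        by_contra h
        push_neg at h
        have h1 : Real.cos |θ - φ| < Real.cos a :=
          Real.cos_lt_cos_of_nonneg_of_le_pi hapos.le (abs_le.2 ⟨hx1.le, hx2⟩) h
        rw [Real.cos_abs] at h1
        linarith
      rw [abs_le] at habs
      constructor <;> linarith [habs.1, habs.2]
    · rintro ⟨h1, h2⟩
      have habs : |θ - φ| ≤ a := abs_le.2 ⟨by linarith, by linarith⟩
      refine ⟨?_, by linarith, by linarith⟩
      have := Real.cos_le_cos_of_nonneg_of_le_pi (abs_nonneg (θ - φ)) hapi.le habs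
      rwa [Real.cos_abs] at this
  rw [harc, Real.volume_Icc]
  congr 1
  ring
end
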